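/- Let q be prime and s ∈ ℕ. Let P be a set of s-tuples (k_1,...,k_s) of nonzero polynomials over F_q with gcd(k_1,...,k_s) = 1, excluding (1,...,1), and let F: ℕ₀^s → ℕ satisfy ∑_{(k_1,...,k_s)∈P} q^{−F(deg k_1,...,deg k_s)} = ∞. Then for μ_s-almost all (f_1,...,f_s) ∈ Z̄^s, there exist infinitely many (k_1,...,k_s) ∈ P with ν({k_1 f_1 + ⋯ + k_s f_s}) ≤ −F(deg k_1, ..., deg k_s). -/

import Mathlib

open MeasureTheory Finset

/-- The `(n+1)`-st digit `ξ_{n+1} ∈ Z_q` of the `q`-adic expansion of a real number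
`x ∈ [0,1)`; via `x ↔ ∑_k ξ_k x^{-k}` this identifies `x` with an element of the
set `Z̄ ⊆ F_q((x^{-1}))` of Laurent series with zero polynomial part, in such a way
that the normalized Haar measure on `Z̄` corresponds to Lebesgue measure on `[0,1)`. -/
noncomputable def qDigit (q : ℕ) (x : ℝ) (n : ℕ) : ZMod q :=
  ((⌊x * (q : ℝ) ^ (n + 1)⌋ : ℤ) : ZMod q)

/-- The coefficient of `x^{-(m+1)}` of the product `k(x)·f(x)` in `F_q((x^{-1}))`,
where the Laurent series `f = ∑_{j≥0} f_j x^{-(j+1)}` is given by its coefficient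
sequence.  In particular `ν({k·f}) ≤ -M` iff `fracCoeff q k f n = 0` for all `n`
with `n + 2 ≤ M`. -/
def fracCoeff (q : ℕ) (k : Polynomial (ZMod q)) (f : ℕ → ZMod q) (m : ℕ) : ZMod q :=
  ∑ j ∈ Finset.range (k.natDegree + 1), k.coeff j * f (m + j)

/-- The (monic) gcd of the tuple `k` is `1`: every common divisor is a unit. -/
def GcdOne {q s : ℕ} (k : Fin s → Polynomial (ZMod q)) : Prop :=
  ∀ d : Polynomial (ZMod q), (∀ i, d ∣ k i) → IsUnit d


section NatDigits
variable {q : ℕ}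

lemma sum_digits_lt (hq : 2 ≤ q) (c : ℕ → ℕ) (hc : ∀ e, c e < q) (N : ℕ) :
    ∑ e ∈ range N, c e * q ^ e < q ^ N := by
  induction N with
  | zero => simp
  | succ N ih =>
    rw [Finset.sum_range_succ, pow_succ]
    have h1 : c N * q ^ N ≤ (q - 1) * q ^ N :=
      Nat.mul_le_mul_right _ (Nat.le_sub_one_of_lt (hc N))
    have h2 : q ^ N + (q - 1) * q ^ N = q ^ N * q := by
      have h3 : q ^ N + (q - 1) * q ^ N = (1 + (q - 1)) * q ^ N := by ring
      rw [h3]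
      have : 1 + (q - 1) = q := by omega
      rw [this, Nat.mul_comm]
    omega

lemma digits_reconstruct (hq : 2 ≤ q) : ∀ N K, K < q ^ N →
    ∑ e ∈ range N, K / q ^ e % q * q ^ e = K := by
  have hq0 : 0 < q := by omega
  intro N
  induction N with
  | zero => intro K hK; simp [(Nat.lt_one_iff.mp (by simpa using hK) : K = 0)]
  | succ N ih =>
    intro K hK
    rw [Finset.sum_range_succ']
    have h1 : ∀ e : ℕ, K / q ^ (e + 1) % q * q ^ (e + 1) = q * (K / q / q ^ e % q * q ^ e) := by
      intro e
      rw [pow_succ', Nat.mul_comm q (q^e), ← Nat.div_div_eq_div_mul, Nat.div_div_eq_div_mul,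
        Nat.mul_comm (q^e) q, ← Nat.div_div_eq_div_mul]
      ring
    simp only [h1]
    rw [← Finset.mul_sum, ih (K / q) (by
      rw [Nat.div_lt_iff_lt_mul hq0]; rw [pow_succ] at hK; exact hK)]
    simp only [pow_zero, Nat.mul_one, Nat.div_one]
    exact Nat.div_add_mod K q

lemma digits_extract (hq : 2 ≤ q) (c : ℕ → ℕ) (hc : ∀ e, c e < q) (N j : ℕ) (hj : j < N) :
    (∑ e ∈ range N, c e * q ^ e) / q ^ j % q = c j := by
  have hq0 : 0 < q := by omega
  have hsplit : ∑ e ∈ range N, c e * q ^ e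
      = ∑ e ∈ range j, c e * q ^ e + q ^ j * ∑ d ∈ range (N - j), c (j + d) * q ^ d := by
    rw [Finset.mul_sum, ← Finset.sum_range_add_sum_Ico _ (le_of_lt hj)]
    congr 1
    rw [Finset.sum_Ico_eq_sum_range]
    apply Finset.sum_congr rfl
    intro d _
    ring
  rw [hsplit, Nat.add_mul_div_left _ _ (Nat.pow_pos (n := j) hq0),
    Nat.div_eq_of_lt (sum_digits_lt hq c hc j), Nat.zero_add]
  have hNj : N - j = (N - j - 1) + 1 := by omega
  rw [hNj, Finset.sum_range_succ']
  simp only [pow_zero, Nat.mul_one, Nat.add_zero]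
  have h2 : ∀ k : ℕ, c (j + (k + 1)) * q ^ (k + 1) = q * (c (j + (k + 1)) * q ^ k) := by
    intro k; rw [pow_succ]; ring
  simp only [h2]
  rw [← Finset.mul_sum, Nat.add_comm, Nat.add_mul_mod_self_left]
  exact Nat.mod_eq_of_lt (hc j)

end NatDigits



section Cyl
variable {q : ℕ}

/-- digit word as the sequence of base-q digits of a natural number -/
def wordC (q N : ℕ) (w : Fin N → ZMod q) : ℕ → ℕ :=
  fun e => if h : e < N then (w ⟨N - 1 - e, by omega⟩).val else 0

def wordNat (q N : ℕ) (w : Fin N → ZMod q) : ℕ :=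
  ∑ e ∈ range N, wordC q N w e * q ^ e

lemma wordC_lt (hq : 2 ≤ q) (N : ℕ) (w : Fin N → ZMod q) (e : ℕ) : wordC q N w e < q := by
  have : NeZero q := ⟨by omega⟩
  unfold wordC
  split
  · exact ZMod.val_lt _
  · omega

lemma wordNat_lt (hq : 2 ≤ q) (N : ℕ) (w : Fin N → ZMod q) : wordNat q N w < q ^ N :=
  sum_digits_lt hq _ (wordC_lt hq N w) N

lemma qDigit_floor (hq : 2 ≤ q) {x : ℝ} (hx : 0 ≤ x) {N : ℕ} (m : Fin N) :
    qDigit q x m = ((⌊x * (q:ℝ) ^ N⌋₊ / q ^ (N - 1 - (m:ℕ)) : ℕ) : ZMod q) := by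
  have hq0 : (0:ℝ) < q := by positivity
  have hpow : x * (q:ℝ) ^ ((m:ℕ) + 1) = x * (q:ℝ) ^ N / (q:ℝ) ^ (N - 1 - (m:ℕ)) := by
    rw [eq_div_iff (by positivity), mul_assoc, ← pow_add]
    congr 2
    omega
  have h1 : ⌊x * (q:ℝ) ^ ((m:ℕ) + 1)⌋₊ = ⌊x * (q:ℝ) ^ N⌋₊ / q ^ (N - 1 - (m:ℕ)) := by
    rw [hpow]
    rw [show ((q:ℝ) ^ (N - 1 - (m:ℕ))) = ((q ^ (N - 1 - (m:ℕ)) : ℕ) : ℝ) by push_cast; ring]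
    rw [Nat.floor_div_natCast]
  have h2 : (⌊x * (q:ℝ) ^ ((m:ℕ) + 1)⌋₊ : ℤ) = ⌊x * (q:ℝ) ^ ((m:ℕ) + 1)⌋ :=
    Int.natCast_floor_eq_floor (by positivity)
  unfold qDigit
  rw [← h2, h1]
  norm_cast

lemma cyl_eq_Ico (hq : 2 ≤ q) (N : ℕ) (w : Fin N → ZMod q) :
    {x : ℝ | x ∈ Set.Ico (0:ℝ) 1 ∧ ∀ m : Fin N, qDigit q x (m:ℕ) = w m}
      = Set.Ico ((wordNat q N w : ℝ) / (q:ℝ) ^ N) ((wordNat q N w + 1 : ℝ) / (q:ℝ) ^ N) := by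
  have : NeZero q := ⟨by omega⟩
  have hq0 : (0:ℝ) < q := by positivity
  have hqN : (0:ℝ) < (q:ℝ) ^ N := by positivity
  have hKlt := wordNat_lt hq N w
  ext x
  simp only [Set.mem_setOf_eq, Set.mem_Ico]
  constructor
  · rintro ⟨⟨hx0, hx1⟩, hdig⟩
    set K' : ℕ := ⌊x * (q:ℝ) ^ N⌋₊ with hK'
    have hxN : x * (q:ℝ) ^ N < (q:ℝ) ^ N := by nlinarith
    have hK'lt : K' < q ^ N := by
      rw [hK']
      rw [Nat.floor_lt (by positivity : (0:ℝ) ≤ x * (q:ℝ)^N)]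
      push_cast
      exact hxN
    -- each digit of K' matches wordC
    have hce : ∀ e, e < N → K' / q ^ e % q = wordC q N w e := by
      intro e he
      have hm : N - 1 - e < N := by omega
      have := hdig ⟨N - 1 - e, hm⟩
      rw [qDigit_floor hq hx0] at this
      simp only at this
      have he' : N - 1 - (N - 1 - e) = e := by omega
      rw [he'] at this
      have hval := congrArg ZMod.val this
      rw [ZMod.val_natCast] at hval
      rw [hval]
      unfold wordC
      rw [dif_pos he]
    have hKK : wordNat q N w = K' := by
      rw [wordNat, ← digits_reconstruct hq N K' hK'lt]
      apply Finset.sum_congr rfl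
      intro e he
      rw [hce e (Finset.mem_range.mp he)]
    have hfl : (K' : ℝ) ≤ x * (q:ℝ) ^ N := Nat.floor_le (by positivity)
    have hfu : x * (q:ℝ) ^ N < (K' : ℝ) + 1 := Nat.lt_floor_add_one _
    constructor
    · rw [div_le_iff₀ hqN, hKK]; exact hfl
    · rw [lt_div_iff₀ hqN, hKK]; exact hfu
  · rintro ⟨hlo, hhi⟩
    have hx0 : 0 ≤ x := le_trans (by positivity) hlo
    have hxK : (wordNat q N w : ℝ) ≤ x * (q:ℝ) ^ N := by
      rwa [div_le_iff₀ hqN] at hlo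
    have hxK1 : x * (q:ℝ) ^ N < (wordNat q N w : ℝ) + 1 := by
      rw [lt_div_iff₀ hqN] at hhi; linarith
    have hfloor : ⌊x * (q:ℝ) ^ N⌋₊ = wordNat q N w := by
      rw [Nat.floor_eq_iff (by positivity)]
      exact ⟨hxK, hxK1⟩
    have hx1 : x < 1 := by
      rw [lt_div_iff₀ hqN] at hhi
      have : (wordNat q N w : ℝ) + 1 ≤ (q:ℝ) ^ N := by
        have : (wordNat q N w) + 1 ≤ q ^ N := hKlt
        exact_mod_cast this
      nlinarith
    refine ⟨⟨hx0, hx1⟩, fun m => ?_⟩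
    rw [qDigit_floor hq hx0, hfloor]
    have hm : (m:ℕ) < N := m.isLt
    have hdigit : wordNat q N w / q ^ (N - 1 - (m:ℕ)) % q = (w m).val := by
      rw [wordNat, digits_extract hq _ (wordC_lt hq N w) N _ (by omega)]
      unfold wordC
      rw [dif_pos (by omega : N - 1 - (m:ℕ) < N)]
      congr
      · omega
    calc ((wordNat q N w / q ^ (N - 1 - (m:ℕ)) : ℕ) : ZMod q)
        = ((wordNat q N w / q ^ (N - 1 - (m:ℕ)) % q : ℕ) : ZMod q) := (ZMod.natCast_mod _ _).symm
      _ = (((w m).val : ℕ) : ZMod q) := by rw [hdigit]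
      _ = w m := by rw [ZMod.natCast_val, ZMod.cast_id]

lemma cyl_measure (hq : 2 ≤ q) (N : ℕ) (w : Fin N → ZMod q) :
    volume {x : ℝ | x ∈ Set.Ico (0:ℝ) 1 ∧ ∀ m : Fin N, qDigit q x (m:ℕ) = w m}
      = ((q:ENNReal) ^ N)⁻¹ := by
  rw [cyl_eq_Ico hq N w, Real.volume_Ico]
  have hqN : (0:ℝ) < (q:ℝ) ^ N := by positivity
  have : (wordNat q N w + 1 : ℝ) / (q:ℝ) ^ N - (wordNat q N w : ℝ) / (q:ℝ) ^ N
      = ((q:ℝ) ^ N)⁻¹ := by field_simp; ring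
  rw [this, ENNReal.ofReal_inv_of_pos hqN, ENNReal.ofReal_pow (by positivity),
    ENNReal.ofReal_natCast]

end Cyl
section Event
open Finset MeasureTheory
variable {q s : ℕ}

noncomputable def digitVec (q s N : ℕ) (f : Fin s → ℝ) : Fin s → Fin N → ZMod q :=
  fun i m => qDigit q (f i) m

lemma cylS_eq (N : ℕ) (v : Fin s → Fin N → ZMod q) :
    {f : Fin s → ℝ | ∀ i, f i ∈ Set.Ico (0:ℝ) 1 ∧ ∀ m : Fin N, qDigit q (f i) (m:ℕ) = v i m}
      = Set.pi Set.univ (fun i => {x : ℝ | x ∈ Set.Ico (0:ℝ) 1 ∧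
          ∀ m : Fin N, qDigit q x (m:ℕ) = v i m}) := by
  ext f
  simp [Set.mem_pi]

lemma cylS_measure (hq : 2 ≤ q) (N : ℕ) (v : Fin s → Fin N → ZMod q) :
    volume {f : Fin s → ℝ | ∀ i, f i ∈ Set.Ico (0:ℝ) 1 ∧
        ∀ m : Fin N, qDigit q (f i) (m:ℕ) = v i m}
      = (((q:ENNReal) ^ N)⁻¹) ^ s := by
  rw [cylS_eq, volume_pi_pi]
  rw [Finset.prod_congr rfl (fun i _ => cyl_measure hq N (v i))]
  simp

lemma cylS_measurable (hq : 2 ≤ q) (N : ℕ) (v : Fin s → Fin N → ZMod q) :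
    MeasurableSet {f : Fin s → ℝ | ∀ i, f i ∈ Set.Ico (0:ℝ) 1 ∧
        ∀ m : Fin N, qDigit q (f i) (m:ℕ) = v i m} := by
  rw [cylS_eq]
  apply MeasurableSet.univ_pi
  intro i
  rw [cyl_eq_Ico hq N (v i)]
  exact measurableSet_Ico

lemma event_eq_biUnion [NeZero q] (N : ℕ) (p : (Fin s → Fin N → ZMod q) → Prop)
    [DecidablePred p] :
    {f : Fin s → ℝ | (∀ i, f i ∈ Set.Ico (0:ℝ) 1) ∧ p (digitVec q s N f)}
      = ⋃ v ∈ Finset.univ.filter p, {f : Fin s → ℝ | ∀ i, f i ∈ Set.Ico (0:ℝ) 1 ∧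
          ∀ m : Fin N, qDigit q (f i) (m:ℕ) = v i m} := by
  ext f
  simp only [Set.mem_setOf_eq, Set.mem_iUnion, Finset.mem_filter, Finset.mem_univ, true_and,
    exists_prop]
  constructor
  · rintro ⟨hbox, hp⟩
    exact ⟨digitVec q s N f, hp, fun i => ⟨hbox i, fun m => rfl⟩⟩
  · rintro ⟨v, hp, hv⟩
    have hdv : digitVec q s N f = v := by
      funext i m
      exact (hv i).2 m
    exact ⟨fun i => (hv i).1, hdv ▸ hp⟩

lemma event_measurable [NeZero q] (hq : 2 ≤ q) (N : ℕ) (p : (Fin s → Fin N → ZMod q) → Prop)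
    [DecidablePred p] :
    MeasurableSet {f : Fin s → ℝ | (∀ i, f i ∈ Set.Ico (0:ℝ) 1) ∧ p (digitVec q s N f)} := by
  rw [event_eq_biUnion N p]
  exact (Finset.univ.filter p).measurableSet_biUnion (fun v _ => cylS_measurable hq N v)

lemma event_measure [NeZero q] (hq : 2 ≤ q) (N : ℕ) (p : (Fin s → Fin N → ZMod q) → Prop)
    [DecidablePred p] :
    volume {f : Fin s → ℝ | (∀ i, f i ∈ Set.Ico (0:ℝ) 1) ∧ p (digitVec q s N f)}
      = (Finset.univ.filter p).card * (((q:ENNReal) ^ N)⁻¹) ^ s := by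
  classical
  rw [event_eq_biUnion N p, measure_biUnion_finset ?_ (fun v _ => cylS_measurable hq N v)]
  · rw [Finset.sum_congr rfl (fun v _ => cylS_measure hq N v), Finset.sum_const, nsmul_eq_mul]
  · intro v hv v' hv' hne
    simp only [Function.onFun]
    rw [Set.disjoint_left]
    intro f hf hf'
    apply hne
    funext i m
    rw [← (hf i).2 m, (hf' i).2 m]

end Event
section LinAlg
open Finset Polynomial

variable {q s : ℕ} [Fact (Nat.Prime q)]

def extVec {N : ℕ} (v : Fin s → Fin N → ZMod q) (i : Fin s) : ℕ → ZMod q :=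
  fun m => if h : m < N then v i ⟨m, h⟩ else 0

lemma extVec_add {N : ℕ} (v w : Fin s → Fin N → ZMod q) (i : Fin s) (m : ℕ) :
    extVec (v + w) i m = extVec v i m + extVec w i m := by
  unfold extVec; split <;> simp

lemma extVec_smul {N : ℕ} (c : ZMod q) (v : Fin s → Fin N → ZMod q) (i : Fin s) (m : ℕ) :
    extVec (c • v) i m = c * extVec v i m := by
  unfold extVec; split <;> simp

def condMap (k : Fin s → Polynomial (ZMod q)) (M N : ℕ) :
    (Fin s → Fin N → ZMod q) →ₗ[ZMod q] (Fin M → ZMod q) where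
  toFun v := fun n => ∑ i, fracCoeff q (k i) (extVec v i) n
  map_add' v w := by
    funext n
    simp only [fracCoeff, extVec_add, mul_add, Finset.sum_add_distrib, Pi.add_apply]
  map_smul' c v := by
    funext n
    simp only [fracCoeff, extVec_smul, RingHom.id_apply, Pi.smul_apply, smul_eq_mul,
      Finset.mul_sum, mul_left_comm]

lemma fracCoeff_delta (k : Polynomial (ZMod q)) (m₀ n : ℕ) :
    fracCoeff q k (fun m' => if m' = m₀ then (1:ZMod q) else 0) n
      = if n ≤ m₀ then k.coeff (m₀ - n) else 0 := by
  unfold fracCoeff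
  simp only [mul_ite, mul_one, mul_zero]
  by_cases hnm : n ≤ m₀
  · rw [if_pos hnm]
    by_cases hdeg : m₀ - n ≤ k.natDegree
    · rw [Finset.sum_eq_single (m₀ - n)]
      · rw [if_pos (by omega : n + (m₀ - n) = m₀)]
      · intro j _ hj
        rw [if_neg (by omega)]
      · intro h
        exact absurd (Finset.mem_range.mpr (by omega)) h
    · rw [Finset.sum_eq_zero, Polynomial.coeff_eq_zero_of_natDegree_lt (by omega)]
      intro j hj
      rw [Finset.mem_range] at hj
      rw [if_neg (by omega)]
  · rw [if_neg hnm, Finset.sum_eq_zero]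
    intro j hj
    rw [if_neg (by omega)]

lemma extVec_single {N : ℕ} (i₀ : Fin s) (m : Fin N) (i : Fin s) :
    extVec (Pi.single i₀ (Pi.single m (1:ZMod q))) i
      = if i = i₀ then (fun m' => if m' = (m:ℕ) then (1:ZMod q) else 0) else 0 := by
  funext m'
  unfold extVec
  by_cases hi : i = i₀
  · subst hi
    rw [if_pos rfl, Pi.single_eq_same]
    by_cases h : m' < N
    · rw [dif_pos h, Pi.single_apply]
      by_cases hm : m' = (m:ℕ)
      · rw [if_pos hm, if_pos (Fin.ext hm : (⟨m', h⟩ : Fin N) = m)]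
      · rw [if_neg hm, if_neg (fun he : (⟨m', h⟩ : Fin N) = m => hm (congrArg Fin.val he))]
    · rw [dif_neg h, if_neg (by omega)]
  · rw [if_neg hi, Pi.single_eq_of_ne hi]
    split <;> simp

lemma fracCoeff_zero (k : Polynomial (ZMod q)) (n : ℕ) :
    fracCoeff q k (0 : ℕ → ZMod q) n = 0 := by
  unfold fracCoeff; simp

lemma condMap_single (k : Fin s → Polynomial (ZMod q)) (M N : ℕ) (i₀ : Fin s) (m : Fin N)
    (n : Fin M) :
    condMap k M N (Pi.single i₀ (Pi.single m (1:ZMod q))) n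
      = if (n:ℕ) ≤ (m:ℕ) then (k i₀).coeff ((m:ℕ) - (n:ℕ)) else 0 := by
  show (∑ i, fracCoeff q (k i) (extVec (Pi.single i₀ (Pi.single m (1:ZMod q))) i) n) = _
  rw [Finset.sum_eq_single i₀]
  · rw [extVec_single, if_pos rfl, fracCoeff_delta]
  · intro i _ hi
    rw [extVec_single, if_neg hi, fracCoeff_zero]
  · intro h; exact absurd (Finset.mem_univ i₀) h

noncomputable def polyOf (q M : ℕ) (a : Fin M → ZMod q) : Polynomial (ZMod q) :=
  ∑ n : Fin M, Polynomial.C (a n) * Polynomial.X ^ (n:ℕ)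

lemma polyOf_coeff (M : ℕ) (a : Fin M → ZMod q) (j : ℕ) :
    (polyOf q M a).coeff j = if h : j < M then a ⟨j, h⟩ else 0 := by
  unfold polyOf
  rw [Polynomial.finset_sum_coeff]
  simp only [Polynomial.coeff_C_mul, Polynomial.coeff_X_pow, mul_ite, mul_one, mul_zero]
  split
  · rename_i h
    rw [Finset.sum_eq_single (⟨j, h⟩ : Fin M)]
    · rw [if_pos rfl]
    · intro b _ hb
      rw [if_neg (fun he => hb (Fin.ext he.symm))]
    · intro hh; exact absurd (Finset.mem_univ _) hh
  · rename_i h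
    apply Finset.sum_eq_zero
    intro b _
    have := b.isLt
    rw [if_neg (by omega : ¬ j = (b:ℕ))]

lemma polyOf_mem_degreeLT (M : ℕ) (a : Fin M → ZMod q) :
    polyOf q M a ∈ Polynomial.degreeLT (ZMod q) M := by
  apply Submodule.sum_mem
  intro n _
  rw [Polynomial.mem_degreeLT]
  calc (Polynomial.C (a n) * Polynomial.X ^ (n:ℕ)).degree ≤ ((n:ℕ) : WithBot ℕ) :=
        Polynomial.degree_C_mul_X_pow_le _ _
    _ < (M : WithBot ℕ) := by exact_mod_cast Nat.cast_lt.mpr n.isLt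

lemma dual_delta (k : Fin s → Polynomial (ZMod q)) (M N : ℕ) (a : Fin M → ZMod q)
    (i₀ : Fin s) (m : Fin N) :
    ∑ n : Fin M, a n * condMap k M N (Pi.single i₀ (Pi.single m (1:ZMod q))) n
      = (polyOf q M a * k i₀).coeff (m:ℕ) := by
  set A := polyOf q M a with hA
  have hstep : ∀ n : Fin M, a n * condMap k M N (Pi.single i₀ (Pi.single m (1:ZMod q))) n
      = (fun u => if u ≤ (m:ℕ) then A.coeff u * (k i₀).coeff ((m:ℕ) - u) else 0) (n:ℕ) := by
    intro n
    rw [condMap_single]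
    have : A.coeff (n:ℕ) = a n := by rw [hA, polyOf_coeff, dif_pos n.isLt]
    simp only [mul_ite, mul_zero, this]
  rw [Finset.sum_congr rfl (fun n _ => hstep n),
    Fin.sum_univ_eq_sum_range
      (fun u => if u ≤ (m:ℕ) then A.coeff u * (k i₀).coeff ((m:ℕ) - u) else 0) M]
  rw [Polynomial.coeff_mul, Finset.Nat.sum_antidiagonal_eq_sum_range_succ_mk]
  set F : ℕ → ZMod q := fun u => if u ≤ (m:ℕ) then A.coeff u * (k i₀).coeff ((m:ℕ) - u) else 0
    with hF
  have hR : ∑ u ∈ range ((m:ℕ)+1), A.coeff u * (k i₀).coeff ((m:ℕ) - u)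
      = ∑ u ∈ range ((m:ℕ)+1), F u := by
    apply Finset.sum_congr rfl
    intro u hu
    rw [hF]
    simp only
    rw [if_pos (by have := Finset.mem_range.mp hu; omega : u ≤ (m:ℕ))]
  rw [hR]
  have h1 : ∑ u ∈ range M, F u = ∑ u ∈ range (M + ((m:ℕ)+1)), F u := by
    apply Finset.sum_subset (Finset.range_subset_range.mpr (by omega))
    intro u _ hu
    rw [Finset.mem_range, not_lt] at hu
    rw [hF]
    simp only
    split
    · rw [hA, polyOf_coeff, dif_neg (by omega), zero_mul]
    · rfl
  have h2 : ∑ u ∈ range ((m:ℕ)+1), F u = ∑ u ∈ range (M + ((m:ℕ)+1)), F u := by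
    apply Finset.sum_subset (Finset.range_subset_range.mpr (by omega))
    intro u _ hu
    rw [Finset.mem_range, not_lt] at hu
    rw [hF]
    simp only
    rw [if_neg (by omega)]
  rw [h1, h2]

end LinAlg
section Surj
open Finset Polynomial

variable {q s : ℕ} [Fact (Nat.Prime q)]

lemma dual_pi_repr {M : ℕ} (g : (Fin M → ZMod q) →ₗ[ZMod q] ZMod q) (w : Fin M → ZMod q) :
    g w = ∑ n, g (Pi.single n 1) * w n := by
  conv_lhs => rw [← Finset.univ_sum_single w]
  rw [map_sum]
  apply Finset.sum_congr rfl
  intro n _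
  have h : Pi.single n (w n) = w n • (Pi.single n (1 : ZMod q) : Fin M → ZMod q) := by
    funext j
    rw [Pi.smul_apply, Pi.single_apply, Pi.single_apply]
    split <;> simp
  rw [h, _root_.map_smul, smul_eq_mul, mul_comm]

lemma prod_surj (k k' : Fin s → Polynomial (ZMod q)) (M1 M2 N : ℕ)
    (hN1 : ∀ i, M1 + (k i).natDegree < N) (hN2 : ∀ i, M2 + (k' i).natDegree < N)
    (hs : 1 ≤ s)
    (hAB : ∀ A B : Polynomial (ZMod q), A ∈ Polynomial.degreeLT (ZMod q) M1 →
      B ∈ Polynomial.degreeLT (ZMod q) M2 → (∀ i, A * k i + B * k' i = 0) → A = 0 ∧ B = 0) :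
    Function.Surjective ((condMap k M1 N).prod (condMap (q := q) (s := s) k' M2 N)) := by
  have hNpos : 0 < N := by have := hN1 ⟨0, hs⟩; omega
  rw [← LinearMap.range_eq_top]
  by_contra hlt
  obtain ⟨f, hf0, hker⟩ := Submodule.exists_dual_map_eq_bot_of_lt_top
      (lt_top_iff_ne_top.mpr hlt) inferInstance
  have hfv : ∀ v, f (((condMap k M1 N).prod (condMap (q := q) k' M2 N)) v) = 0 := by
    intro v
    have h1 : f (((condMap k M1 N).prod (condMap (q := q) k' M2 N)) v)
        ∈ Submodule.map f (LinearMap.range ((condMap k M1 N).prod (condMap (q := q) k' M2 N))) :=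
      Submodule.mem_map_of_mem (LinearMap.mem_range_self _ v)
    rw [hker] at h1
    exact (Submodule.mem_bot _).mp h1
  set a : Fin M1 → ZMod q := fun n => f (Pi.single n 1, 0) with ha
  set b : Fin M2 → ZMod q := fun n => f (0, Pi.single n 1) with hb
  have repr : ∀ w1 w2, f (w1, w2) = (∑ n, a n * w1 n) + (∑ n, b n * w2 n) := by
    intro w1 w2
    have h12 : ((w1, w2) : (Fin M1 → ZMod q) × (Fin M2 → ZMod q)) = (w1, 0) + (0, w2) := by
      rw [Prod.mk_add_mk, add_zero, zero_add]
    rw [h12, map_add]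
    congr 1
    · have := dual_pi_repr (f.comp (LinearMap.inl (ZMod q) _ (Fin M2 → ZMod q))) w1
      simp only [LinearMap.comp_apply, LinearMap.inl_apply] at this
      rw [this]
    · have := dual_pi_repr (f.comp (LinearMap.inr (ZMod q) (Fin M1 → ZMod q) _)) w2
      simp only [LinearMap.comp_apply, LinearMap.inr_apply] at this
      rw [this]
  set A : Polynomial (ZMod q) := polyOf q M1 a with hA
  set B : Polynomial (ZMod q) := polyOf q M2 b with hB
  have key : ∀ (i : Fin s) (m : Fin N),
      (A * k i).coeff (m:ℕ) + (B * k' i).coeff (m:ℕ) = 0 := by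
    intro i m
    have h0 := hfv (Pi.single i (Pi.single m 1))
    rw [LinearMap.prod_apply, Function.prod, repr, dual_delta, dual_delta] at h0
    exact h0
  have hzero : ∀ i, A * k i + B * k' i = 0 := by
    intro i
    have hdA : (A * k i).natDegree < N := by
      rcases eq_or_ne A 0 with h | h
      · rw [h, zero_mul]; simpa using hNpos
      · have hdeg : A.natDegree < M1 :=
          (Polynomial.natDegree_lt_iff_degree_lt h).mpr
            (Polynomial.mem_degreeLT.mp (polyOf_mem_degreeLT M1 a))
        have := hN1 i
        calc (A * k i).natDegree ≤ A.natDegree + (k i).natDegree :=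
              Polynomial.natDegree_mul_le
          _ < N := by omega
    have hdB : (B * k' i).natDegree < N := by
      rcases eq_or_ne B 0 with h | h
      · rw [h, zero_mul]; simpa using hNpos
      · have hdeg : B.natDegree < M2 :=
          (Polynomial.natDegree_lt_iff_degree_lt h).mpr
            (Polynomial.mem_degreeLT.mp (polyOf_mem_degreeLT M2 b))
        have := hN2 i
        calc (B * k' i).natDegree ≤ B.natDegree + (k' i).natDegree :=
              Polynomial.natDegree_mul_le
          _ < N := by omega
    have hdegsum : (A * k i + B * k' i).natDegree < N :=
      lt_of_le_of_lt (Polynomial.natDegree_add_le _ _) (max_lt hdA hdB)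
    ext m
    rw [Polynomial.coeff_add, Polynomial.coeff_zero]
    rcases lt_or_ge m N with hm | hm
    · exact key i ⟨m, hm⟩
    · rw [Polynomial.coeff_eq_zero_of_natDegree_lt (lt_of_lt_of_le hdA hm),
        Polynomial.coeff_eq_zero_of_natDegree_lt (lt_of_lt_of_le hdB hm), add_zero]
  obtain ⟨hA0, hB0⟩ := hAB A B (polyOf_mem_degreeLT M1 a) (polyOf_mem_degreeLT M2 b) hzero
  have ha0 : a = 0 := by
    funext n
    have : A.coeff (n:ℕ) = a n := by rw [hA, polyOf_coeff, dif_pos n.isLt]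
    rw [← this, hA0, Polynomial.coeff_zero, Pi.zero_apply]
  have hb0 : b = 0 := by
    funext n
    have : B.coeff (n:ℕ) = b n := by rw [hB, polyOf_coeff, dif_pos n.isLt]
    rw [← this, hB0, Polynomial.coeff_zero, Pi.zero_apply]
  apply hf0
  apply LinearMap.ext
  intro w
  rw [show w = (w.1, w.2) from rfl, repr, ha0, hb0]
  simp

lemma filter_card_ker {V W : Type*} [AddCommGroup V] [AddCommGroup W] [Module (ZMod q) V]
    [Module (ZMod q) W] [Fintype V] [Fintype W] [DecidableEq W] [DecidableEq V]
    (Φ : V →ₗ[ZMod q] W) (hsurj : Function.Surjective Φ) :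
    (Finset.univ.filter (fun v => Φ v = 0)).card * Fintype.card W = Fintype.card V := by
  classical
  have h1 : (Finset.univ.filter (fun v => Φ v = 0)).card = Nat.card (LinearMap.ker Φ) := by
    rw [← Fintype.card_subtype]
    rw [Nat.card_eq_fintype_card.symm]
    exact Nat.card_congr (Equiv.subtypeEquivRight (fun v => (LinearMap.mem_ker (f := Φ)).symm))
  have h2 : Nat.card V = Nat.card (V ⧸ LinearMap.ker Φ) * Nat.card (LinearMap.ker Φ) :=
    AddSubgroup.card_eq_card_quotient_mul_card_addSubgroup
      ((LinearMap.ker Φ).toAddSubgroup)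
  have h3 : Nat.card (V ⧸ LinearMap.ker Φ) = Nat.card W :=
    Nat.card_congr (LinearMap.quotKerEquivOfSurjective Φ hsurj).toEquiv
  rw [h1, ← Nat.card_eq_fintype_card, ← Nat.card_eq_fintype_card, h2, h3]
  ring

end Surj
section Dich
open Polynomial

variable {q s : ℕ} [Fact (Nat.Prime q)]

lemma dichotomy (hs : 1 ≤ s) (k k' : Fin s → Polynomial (ZMod q))
    (hk : ∀ i, k i ≠ 0) (hk' : ∀ i, k' i ≠ 0)
    (hg : GcdOne k) (hg' : GcdOne k')
    (hprop : ¬ ∃ c : Polynomial (ZMod q), IsUnit c ∧ ∀ i, k i = c * k' i)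
    (A B : Polynomial (ZMod q)) (h : ∀ i, A * k i + B * k' i = 0) : A = 0 ∧ B = 0 := by
  have i₀ : Fin s := ⟨0, hs⟩
  by_cases hB : B = 0
  · subst hB
    have h0 := h i₀
    rw [zero_mul, add_zero] at h0
    rcases mul_eq_zero.mp h0 with h1 | h1
    · exact ⟨h1, rfl⟩
    · exact absurd h1 (hk i₀)
  · exfalso
    have hA : A ≠ 0 := by
      intro hA0
      subst hA0
      have h0 := h i₀
      rw [zero_mul, zero_add] at h0
      rcases mul_eq_zero.mp h0 with h1 | h1
      · exact hB h1
      · exact hk' i₀ h1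
    set g := GCDMonoid.gcd A B with hgdef
    have hg0 : g ≠ 0 := gcd_ne_zero_of_left hA
    set A' := A / g with hA'def
    set B' := B / g with hB'def
    have hAg : g * A' = A := EuclideanDomain.mul_div_cancel' hg0 (gcd_dvd_left A B)
    have hBg : g * B' = B := EuclideanDomain.mul_div_cancel' hg0 (gcd_dvd_right A B)
    have hcop : IsCoprime A' B' := isCoprime_div_gcd_div_gcd hB
    have hB'0 : B' ≠ 0 := right_div_gcd_ne_zero hB
    have hred : ∀ i, A' * k i = -(B' * k' i) := by
      intro i
      have h0 := h i
      rw [← hAg, ← hBg] at h0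
      have h2 : A' * k i + B' * k' i = 0 := by
        apply mul_left_cancel₀ hg0
        rw [mul_zero]
        linear_combination h0
      linear_combination h2
    have hA'dvd : ∀ i, A' ∣ k' i := by
      intro i
      have hd : A' ∣ B' * k' i := ⟨-(k i), by linear_combination hred i⟩
      exact hcop.dvd_of_dvd_mul_left hd
    have hB'dvd : ∀ i, B' ∣ k i := by
      intro i
      have hd : B' ∣ A' * k i := ⟨-(k' i), by linear_combination hred i⟩
      exact hcop.symm.dvd_of_dvd_mul_left hd
    have hA'unit : IsUnit A' := hg' A' hA'dvd
    have hB'unit : IsUnit B' := hg B' hB'dvd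
    obtain ⟨u, hu⟩ := hA'unit
    apply hprop
    refine ⟨-(B' * ((u⁻¹ : (Polynomial (ZMod q))ˣ) : Polynomial (ZMod q))), (hB'unit.mul (Units.isUnit u⁻¹)).neg, ?_⟩
    intro i
    have hinv : (↑u⁻¹ : Polynomial (ZMod q)) * A' = 1 := by
      rw [← hu]
      exact u.inv_mul
    linear_combination (↑u⁻¹ : Polynomial (ZMod q)) * hred i - k i * hinv
end Dich
section EventMeasure
open Finset MeasureTheory Polynomial

variable {q s : ℕ} [Fact (Nat.Prime q)]

def Ak (q s : ℕ) (k : Fin s → Polynomial (ZMod q)) (M : ℕ) : Set (Fin s → ℝ) :=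
  {f | (∀ i, f i ∈ Set.Ico (0:ℝ) 1) ∧
    ∀ n, n < M → ∑ i, fracCoeff q (k i) (qDigit q (f i)) n = 0}

lemma fracCoeff_extVec (k : Polynomial (ZMod q)) (N n : ℕ) (hn : n + k.natDegree < N)
    (f : Fin s → ℝ) (i : Fin s) :
    fracCoeff q k (extVec (digitVec q s N f) i) n = fracCoeff q k (qDigit q (f i)) n := by
  unfold fracCoeff
  apply Finset.sum_congr rfl
  intro j hj
  rw [Finset.mem_range] at hj
  congr 1
  unfold extVec digitVec
  rw [dif_pos (by omega : n + j < N)]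

lemma cond_iff (k : Fin s → Polynomial (ZMod q)) (M N : ℕ)
    (hM : ∀ i, M + (k i).natDegree < N) (f : Fin s → ℝ) :
    (∀ n, n < M → ∑ i, fracCoeff q (k i) (qDigit q (f i)) n = 0)
      ↔ condMap k M N (digitVec q s N f) = 0 := by
  constructor
  · intro hh
    funext n
    rw [Pi.zero_apply]
    show (∑ i, fracCoeff q (k i) (extVec (digitVec q s N f) i) (n:ℕ)) = 0
    rw [Finset.sum_congr rfl (fun i _ =>
      fracCoeff_extVec (k i) N n (by have := hM i; have := n.isLt; omega) f i)]
    exact hh n n.isLt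
  · intro hh n hn
    have h0 := congrFun hh ⟨n, hn⟩
    rw [Pi.zero_apply] at h0
    rw [← Finset.sum_congr rfl (fun i (_ : i ∈ Finset.univ) =>
      fracCoeff_extVec (k i) N n (by have := hM i; omega) f i)]
    exact h0

lemma Ak_inter_eq (k k' : Fin s → Polynomial (ZMod q)) (M1 M2 N : ℕ)
    (hN1 : ∀ i, M1 + (k i).natDegree < N) (hN2 : ∀ i, M2 + (k' i).natDegree < N) :
    Ak q s k M1 ∩ Ak q s k' M2 = {f : Fin s → ℝ | (∀ i, f i ∈ Set.Ico (0:ℝ) 1) ∧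
      (fun v => condMap k M1 N v = 0 ∧ condMap k' M2 N v = 0) (digitVec q s N f)} := by
  ext f
  simp only [Ak, Set.mem_inter_iff, Set.mem_setOf_eq]
  rw [cond_iff k M1 N hN1 f, cond_iff k' M2 N hN2 f]
  tauto

lemma volume_Ak_inter (hs : 1 ≤ s) (k k' : Fin s → Polynomial (ZMod q)) (M1 M2 : ℕ)
    (hAB : ∀ A B : Polynomial (ZMod q), A ∈ Polynomial.degreeLT (ZMod q) M1 →
      B ∈ Polynomial.degreeLT (ZMod q) M2 → (∀ i, A * k i + B * k' i = 0) → A = 0 ∧ B = 0) :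
    volume (Ak q s k M1 ∩ Ak q s k' M2) = ((q:ENNReal) ^ M1)⁻¹ * ((q:ENNReal) ^ M2)⁻¹ := by
  classical
  have hq : 2 ≤ q := (Fact.out : q.Prime).two_le
  have : NeZero q := ⟨by omega⟩
  set D := Finset.univ.sup (fun i => max (k i).natDegree ((k' i).natDegree)) with hD
  set N := M1 + M2 + D + 1 with hN
  have hsup : ∀ i, (k i).natDegree ≤ D ∧ (k' i).natDegree ≤ D := by
    intro i
    have h1 := Finset.le_sup (f := fun i => max (k i).natDegree ((k' i).natDegree))
      (Finset.mem_univ i)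
    exact ⟨le_trans (le_max_left _ _) h1, le_trans (le_max_right _ _) h1⟩
  have hN1 : ∀ i, M1 + (k i).natDegree < N := by intro i; have := (hsup i).1; omega
  have hN2 : ∀ i, M2 + (k' i).natDegree < N := by intro i; have := (hsup i).2; omega
  rw [Ak_inter_eq k k' M1 M2 N hN1 hN2,
    event_measure hq N (fun v => condMap k M1 N v = 0 ∧ condMap (q := q) k' M2 N v = 0)]
  have hsurj := prod_surj k k' M1 M2 N hN1 hN2 hs hAB
  have hcount := filter_card_ker ((condMap k M1 N).prod (condMap (q := q) k' M2 N)) hsurj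
  have hfil : Finset.univ.filter
        (fun v => condMap k M1 N v = 0 ∧ condMap (q := q) k' M2 N v = 0)
      = Finset.univ.filter
        (fun v => ((condMap k M1 N).prod (condMap (q := q) k' M2 N)) v = 0) := by
    apply Finset.filter_congr
    intro v _
    rw [LinearMap.prod_apply]
    simp [Pi.prod, Prod.ext_iff]
  rw [hfil]
  have hcardW : Fintype.card ((Fin M1 → ZMod q) × (Fin M2 → ZMod q)) = q ^ (M1 + M2) := by
    rw [Fintype.card_prod, Fintype.card_fun, Fintype.card_fun, ZMod.card, Fintype.card_fin,
      Fintype.card_fin, pow_add]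
  have hcardV : Fintype.card (Fin s → Fin N → ZMod q) = q ^ (N * s) := by
    rw [Fintype.card_fun, Fintype.card_fun, ZMod.card, Fintype.card_fin, Fintype.card_fin,
      ← pow_mul]
  rw [hcardW, hcardV] at hcount
  set c := (Finset.univ.filter
    (fun v => ((condMap k M1 N).prod (condMap (q := q) k' M2 N)) v = 0)).card with hc
  have hqe : ((q:ENNReal)) ≠ 0 := Nat.cast_ne_zero.mpr (by omega)
  have hqt : (q:ENNReal) ≠ ⊤ := ENNReal.natCast_ne_top q
  have hkey : (c : ENNReal) * (q:ENNReal) ^ (M1 + M2) = (q:ENNReal) ^ (N * s) := by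
    exact_mod_cast congrArg (fun n : ℕ => (n : ENNReal)) hcount
  have hcval : (c : ENNReal) = (q:ENNReal) ^ (N * s) * ((q:ENNReal) ^ (M1 + M2))⁻¹ := by
    rw [← hkey, mul_assoc, ENNReal.mul_inv_cancel (pow_ne_zero _ hqe) (ENNReal.pow_ne_top hqt),
      mul_one]
  have h1 : (((q:ENNReal) ^ N)⁻¹) ^ s = ((q:ENNReal) ^ (N * s))⁻¹ := by
    rw [← ENNReal.inv_pow, ← pow_mul]
  rw [h1, hcval, mul_comm ((q:ENNReal) ^ (N * s)) _, mul_assoc,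
    ENNReal.mul_inv_cancel (pow_ne_zero _ hqe) (ENNReal.pow_ne_top hqt), mul_one,
    pow_add, ENNReal.mul_inv (Or.inl (pow_ne_zero _ hqe)) (Or.inl (ENNReal.pow_ne_top hqt))]

lemma Ak_zero_inter (k k' : Fin s → Polynomial (ZMod q)) (M : ℕ) :
    Ak q s k M ∩ Ak q s k' 0 = Ak q s k M := by
  ext f
  simp only [Ak, Set.mem_inter_iff, Set.mem_setOf_eq]
  constructor
  · tauto
  · intro h; exact ⟨h, h.1, fun n hn => absurd hn (by omega)⟩

lemma hAB_single (hs : 1 ≤ s) (k k' : Fin s → Polynomial (ZMod q)) (M1 : ℕ)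
    (hknz : ∃ i, k i ≠ 0) :
    ∀ A B : Polynomial (ZMod q), A ∈ Polynomial.degreeLT (ZMod q) M1 →
      B ∈ Polynomial.degreeLT (ZMod q) 0 → (∀ i, A * k i + B * k' i = 0) → A = 0 ∧ B = 0 := by
  intro A B _ hB h
  have hB0 : B = 0 := by
    by_contra hB0
    have h1 := Polynomial.mem_degreeLT.mp hB
    rw [Polynomial.degree_eq_natDegree hB0] at h1
    simp only [Nat.cast_zero] at h1
    exact absurd h1 (not_lt.mpr (by exact_mod_cast Nat.zero_le B.natDegree))
  subst hB0
  obtain ⟨i, hi⟩ := hknz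
  have h0 := h i
  rw [zero_mul, add_zero] at h0
  exact ⟨(mul_eq_zero.mp h0).resolve_right hi, rfl⟩

lemma volume_Ak (hs : 1 ≤ s) (k : Fin s → Polynomial (ZMod q)) (M1 : ℕ)
    (hknz : ∃ i, k i ≠ 0) :
    volume (Ak q s k M1) = ((q:ENNReal) ^ M1)⁻¹ := by
  rw [← Ak_zero_inter k k M1, volume_Ak_inter hs k k M1 0 (hAB_single hs k k M1 hknz)]
  simp

lemma measurable_Ak (k : Fin s → Polynomial (ZMod q)) (M : ℕ) :
    MeasurableSet (Ak q s k M) := by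
  classical
  have hq : 2 ≤ q := (Fact.out : q.Prime).two_le
  have : NeZero q := ⟨by omega⟩
  set D := Finset.univ.sup (fun i => (k i).natDegree) with hD
  set N := M + D + 1 with hN
  have hN1 : ∀ i, M + (k i).natDegree < N := by
    intro i
    have h : (k i).natDegree ≤ D := Finset.le_sup (f := fun i => (k i).natDegree)
      (Finset.mem_univ i)
    omega
  have heq := Ak_inter_eq k k M M N hN1 hN1
  rw [Set.inter_self] at heq
  rw [heq]
  exact event_measurable hq N
    (fun v => condMap k M N v = 0 ∧ condMap (q := q) k M N v = 0)

end EventMeasure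
section BC
open MeasureTheory Finset Filter Topology

lemma pairwise_bc {Ω : Type*} [MeasurableSpace Ω] (μ : Measure Ω) [IsProbabilityMeasure μ]
    (A : ℕ → Set Ω) (hm : ∀ n, MeasurableSet (A n)) (C : ℕ)
    (R : ℕ → ℕ → Prop) [DecidableRel R]
    (hcard : ∀ n N, ((Finset.range N).filter (fun m => R n m)).card ≤ C)
    (hind : ∀ n m, ¬ R n m → μ (A n ∩ A m) = μ (A n) * μ (A m))
    (hdiv : ∑' n, μ (A n) = ⊤) :
    μ {x | {n | x ∈ A n}.Finite} = 0 := by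
  classical
  set X : ℕ → Ω → ℝ := fun n => (A n).indicator (fun _ => (1:ℝ)) with hX
  set S : ℕ → Ω → ℝ := fun N x => ∑ n ∈ range N, X n x with hS
  set p : ℕ → ℝ := fun n => (μ (A n)).toReal with hp
  set E : ℕ → ℝ := fun N => ∑ n ∈ range N, p n with hE
  have hXint : ∀ n, Integrable (X n) μ := fun n => by
    rw [hX]
    exact (integrable_indicator_iff (hm n)).mpr
      (integrableOn_const (measure_ne_top μ _))
  have hXX : ∀ n m, (fun x => X n x * X m x) = (A n ∩ A m).indicator (fun _ => (1:ℝ)) := by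
    intro n m
    funext x
    rw [hX]
    simp only [Set.indicator_apply, Set.mem_inter_iff]
    by_cases h1 : x ∈ A n <;> by_cases h2 : x ∈ A m <;> simp [h1, h2]
  have hXXint : ∀ n m, Integrable (fun x => X n x * X m x) μ := by
    intro n m
    rw [hXX]
    exact (integrable_indicator_iff ((hm n).inter (hm m))).mpr
      (integrableOn_const (measure_ne_top μ _))
  have hintX : ∀ n, ∫ x, X n x ∂μ = p n := by
    intro n
    rw [hX, hp]
    simp only
    rw [integral_indicator_const (1:ℝ) (hm n), smul_eq_mul, mul_one, measureReal_def]
  have hintXX : ∀ n m, ∫ x, X n x * X m x ∂μ = (μ (A n ∩ A m)).toReal := by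
    intro n m
    rw [hXX n m, integral_indicator_const (1:ℝ) ((hm n).inter (hm m)), smul_eq_mul, mul_one, measureReal_def]
  have hSint : ∀ N, Integrable (S N) μ := fun N => by
    rw [hS]
    exact integrable_finset_sum _ (fun n _ => hXint n)
  have hintS : ∀ N, ∫ x, S N x ∂μ = E N := by
    intro N
    rw [hS, hE]
    rw [integral_finset_sum _ (fun n _ => hXint n)]
    exact Finset.sum_congr rfl (fun n _ => hintX n)
  have hSSint : ∀ N, Integrable (fun x => S N x * S N x) μ := by
    intro N
    have h1 : (fun x => S N x * S N x)
        = fun x => ∑ n ∈ range N, ∑ m ∈ range N, X n x * X m x := by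
      funext x
      rw [hS]
      rw [Finset.sum_mul_sum]
    rw [h1]
    exact integrable_finset_sum _ (fun n _ => integrable_finset_sum _ (fun m _ => hXXint n m))
  have hintSS : ∀ N, ∫ x, S N x * S N x ∂μ
      = ∑ n ∈ range N, ∑ m ∈ range N, (μ (A n ∩ A m)).toReal := by
    intro N
    have h1 : (fun x => S N x * S N x)
        = fun x => ∑ n ∈ range N, ∑ m ∈ range N, X n x * X m x := by
      funext x
      rw [hS]
      rw [Finset.sum_mul_sum]
    rw [h1, integral_finset_sum _ (fun n _ => integrable_finset_sum _ (fun m _ => hXXint n m))]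
    refine Finset.sum_congr rfl (fun n _ => ?_)
    rw [integral_finset_sum _ (fun m _ => hXXint n m)]
    exact Finset.sum_congr rfl (fun m _ => hintXX n m)
  have hIntSq : ∀ N, Integrable (fun x => (E N - S N x)^2) μ := by
    intro N
    have h1 : (fun x => (E N - S N x)^2)
        = fun x => (E N^2 - 2*E N * S N x) + S N x * S N x := by
      funext x
      ring
    rw [h1]
    exact ((integrable_const _).sub ((hSint N).const_mul _)).add (hSSint N)
  have hS2 : ∀ N, ∫ x, (E N - S N x)^2 ∂μ
      = (∑ n ∈ range N, ∑ m ∈ range N, (μ (A n ∩ A m)).toReal) - E N^2 := by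
    intro N
    have h1 : (fun x => (E N - S N x)^2)
        = fun x => (E N^2 - 2*E N * S N x) + S N x * S N x := by
      funext x
      ring
    have hg2 : Integrable (fun x => 2 * E N * S N x) μ := (hSint N).const_mul _
    have hf1 : Integrable (fun x => E N ^ 2 - 2 * E N * S N x) μ :=
      (integrable_const _).sub hg2
    rw [h1, integral_add hf1 (hSSint N), integral_sub (integrable_const _) hg2, integral_const,
      probReal_univ, integral_const_mul, hintS, hintSS]
    simp only [ENNReal.toReal_one, smul_eq_mul, one_mul]
    ring
  have hVar : ∀ N, ∫ x, (E N - S N x)^2 ∂μ ≤ C * E N := by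
    intro N
    rw [hS2]
    have hEsq : E N ^ 2 = ∑ n ∈ range N, ∑ m ∈ range N, p n * p m := by
      rw [hE, pow_two]
      rw [Finset.sum_mul_sum]
    rw [hEsq, ← Finset.sum_sub_distrib]
    have hrow : ∀ n ∈ range N,
        (∑ m ∈ range N, (μ (A n ∩ A m)).toReal - ∑ m ∈ range N, p n * p m)
          ≤ (C:ℝ) * p n := by
      intro n _
      rw [← Finset.sum_sub_distrib]
      rw [← Finset.sum_filter_add_sum_filter_not (range N) (fun m => R n m)]
      have h2 : ∑ m ∈ (range N).filter (fun m => ¬ R n m),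
          ((μ (A n ∩ A m)).toReal - p n * p m) = 0 := by
        apply Finset.sum_eq_zero
        intro m hm2
        rw [Finset.mem_filter] at hm2
        rw [hind n m hm2.2, ENNReal.toReal_mul, hp]
        ring
      rw [h2, add_zero]
      calc ∑ m ∈ (range N).filter (fun m => R n m),
            ((μ (A n ∩ A m)).toReal - p n * p m)
          ≤ ∑ m ∈ (range N).filter (fun m => R n m), p n := by
            apply Finset.sum_le_sum
            intro m _
            have ha : (μ (A n ∩ A m)).toReal ≤ p n := by
              rw [hp]
              exact ENNReal.toReal_mono (measure_ne_top μ _)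
                (measure_mono Set.inter_subset_left)
            have hb : 0 ≤ p n * p m := mul_nonneg ENNReal.toReal_nonneg ENNReal.toReal_nonneg
            linarith
        _ = ((range N).filter (fun m => R n m)).card * p n := by
            rw [Finset.sum_const, nsmul_eq_mul]
        _ ≤ (C:ℝ) * p n := by
            apply mul_le_mul_of_nonneg_right _ ENNReal.toReal_nonneg
            exact_mod_cast hcard n N
    calc ∑ n ∈ range N, (∑ m ∈ range N, (μ (A n ∩ A m)).toReal - ∑ m ∈ range N, p n * p m)
        ≤ ∑ n ∈ range N, (C:ℝ) * p n := Finset.sum_le_sum hrow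
      _ = C * E N := by rw [hE, Finset.mul_sum]
  have hcheb : ∀ (t : ℝ) (N : ℕ), t + 1 ≤ E N →
      (μ {x | S N x ≤ t}).toReal * (E N - t)^2 ≤ C * E N := by
    intro t N htE
    have hmono : {x | S N x ≤ t} ⊆ {x | (E N - t)^2 ≤ (E N - S N x)^2} := by
      intro x hx
      simp only [Set.mem_setOf_eq] at hx ⊢
      nlinarith
    have hmarkov := mul_meas_ge_le_integral_of_nonneg
      (Eventually.of_forall (fun x => sq_nonneg (E N - S N x))) (hIntSq N) ((E N - t)^2)
    calc (μ {x | S N x ≤ t}).toReal * (E N - t)^2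
        ≤ (μ {x | (E N - t)^2 ≤ (E N - S N x)^2}).toReal * (E N - t)^2 := by
          apply mul_le_mul_of_nonneg_right _ (sq_nonneg _)
          exact ENNReal.toReal_mono (measure_ne_top μ _) (measure_mono hmono)
      _ = (E N - t)^2 * (μ {x | (E N - t)^2 ≤ (E N - S N x)^2}).toReal := by ring
      _ ≤ ∫ x, (E N - S N x)^2 ∂μ := hmarkov
      _ ≤ C * E N := hVar N
  have hEtop : ∀ b : ℝ, ∃ N, b ≤ E N := by
    intro b
    have h1 : Tendsto (fun N => ∑ n ∈ range N, μ (A n)) atTop (𝓝 (∑' n, μ (A n))) :=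
      ENNReal.tendsto_nat_tsum _
    rw [hdiv] at h1
    have h2 := h1.eventually (lt_mem_nhds (show ENNReal.ofReal b < ⊤ from ENNReal.ofReal_lt_top))
    obtain ⟨N, hN⟩ := h2.exists
    refine ⟨N, ?_⟩
    have hfin : ∀ n ∈ range N, μ (A n) ≠ ⊤ := fun n _ => measure_ne_top μ _
    have hE_eq : E N = (∑ n ∈ range N, μ (A n)).toReal := by
      rw [hE, hp]
      exact (ENNReal.toReal_sum hfin).symm
    rw [hE_eq]
    rcases le_or_gt 0 b with hb | hb
    · calc b = (ENNReal.ofReal b).toReal := (ENNReal.toReal_ofReal hb).symm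
        _ ≤ (∑ n ∈ range N, μ (A n)).toReal :=
          ENNReal.toReal_mono (ENNReal.sum_ne_top.mpr hfin) hN.le
    · exact le_trans hb.le ENNReal.toReal_nonneg
  have hZ : ∀ t : ℕ, μ (⋂ N, {x | S N x ≤ (t:ℝ)}) = 0 := by
    intro t
    by_contra hne
    set B := (μ (⋂ N, {x | S N x ≤ (t:ℝ)})).toReal with hB
    have hBpos : 0 < B := ENNReal.toReal_pos hne (measure_ne_top μ _)
    obtain ⟨N, hN⟩ := hEtop (max ((t:ℝ) + 1) ((t:ℝ) + ((C:ℝ)*(1 + t))/B + 1))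
    have h1 : (t:ℝ) + 1 ≤ E N := le_trans (le_max_left _ _) hN
    have h2 : (t:ℝ) + ((C:ℝ)*(1 + t))/B + 1 ≤ E N := le_trans (le_max_right _ _) hN
    have hle : μ (⋂ N, {x | S N x ≤ (t:ℝ)}) ≤ μ {x | S N x ≤ (t:ℝ)} :=
      measure_mono (Set.iInter_subset _ N)
    have hch := hcheb t N h1
    have hble : B * (E N - t)^2 ≤ C * E N :=
      le_trans (mul_le_mul_of_nonneg_right
        (ENNReal.toReal_mono (measure_ne_top μ _) hle) (sq_nonneg _)) hch
    have hy1 : (1:ℝ) ≤ E N - t := by linarith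
    have hEb : E N ≤ (E N - t) * (1 + t) := by nlinarith [Nat.cast_nonneg (α := ℝ) t]
    have h3 : B * (E N - t)^2 ≤ (C:ℝ) * ((E N - t) * (1+t)) :=
      le_trans hble (mul_le_mul_of_nonneg_left hEb (Nat.cast_nonneg C))
    have h4 : B * (E N - t) ≤ (C:ℝ) * (1+t) := by nlinarith
    have h5 : E N - t ≤ (C:ℝ)*(1+t)/B := by
      rw [le_div_iff₀ hBpos]
      linarith
    have h6 : ((C:ℝ)*(1 + t))/B + 1 ≤ E N - t := by linarith
    linarith
  have hincl : {x | {n | x ∈ A n}.Finite} ⊆ ⋃ t : ℕ, ⋂ N, {x | S N x ≤ (t:ℝ)} := by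
    intro x hx
    simp only [Set.mem_setOf_eq] at hx
    refine Set.mem_iUnion.mpr ⟨hx.toFinset.card, Set.mem_iInter.mpr (fun N => ?_)⟩
    show S N x ≤ _
    have hSval : S N x = (((range N).filter (fun n => x ∈ A n)).card : ℝ) := by
      rw [hS, hX]
      simp only [Set.indicator_apply]
      rw [Finset.sum_boole]
    rw [hSval]
    have hsub : (range N).filter (fun n => x ∈ A n) ⊆ hx.toFinset := by
      intro m hm2
      rw [Set.Finite.mem_toFinset]
      exact (Finset.mem_filter.mp hm2).2
    exact_mod_cast Nat.cast_le.mpr (Finset.card_le_card hsub)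
  exact measure_mono_null hincl (measure_iUnion_null hZ)

end BC
section Final
open MeasureTheory Finset

/-- Lemma 4 of the paper: if `P` is a set of tuples `(k_1,…,k_s)` of nonzero
polynomials with gcd `1`, excluding `(1,…,1)`, and `F : ℕ₀^s → ℕ` satisfies
`∑_{(k_1,…,k_s) ∈ P} q^{-F(deg k_1,…,deg k_s)} = ∞`, then for almost all
`(f_1,…,f_s) ∈ Z̄^s` there are infinitely many `(k_1,…,k_s) ∈ P` with
`ν({k_1 f_1 + ⋯ + k_s f_s}) ≤ -F(deg k_1,…,deg k_s)`. -/
theorem almost_all_infinitely_many (q : ℕ) (hq : q.Prime) (s : ℕ) (hs : 1 ≤ s)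
    (P : Set (Fin s → Polynomial (ZMod q)))
    (hP : ∀ k ∈ P, (∀ i, k i ≠ 0) ∧ GcdOne k ∧ ¬ ∀ i, k i = 1)
    (F : (Fin s → ℕ) → ℕ)
    (hdiv : ∑' k : P, ((q : ENNReal) ^ F (fun i => (k.val i).natDegree))⁻¹ = ⊤) :
    volume {f : Fin s → ℝ | (∀ i, f i ∈ Set.Ico (0:ℝ) 1) ∧
        ¬ {k : Fin s → Polynomial (ZMod q) | k ∈ P ∧
            ∀ n : ℕ, n + 2 ≤ F (fun i => (k i).natDegree) →
              ∑ i, fracCoeff q (k i) (qDigit q (f i)) n = 0}.Infinite} = 0 := by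
  classical
  haveI : Fact (Nat.Prime q) := ⟨hq⟩
  have hq2 : 2 ≤ q := hq.two_le
  haveI : NeZero q := ⟨by omega⟩
  set Mk : (Fin s → Polynomial (ZMod q)) → ℕ := fun k => F (fun i => (k i).natDegree) - 1
    with hMk
  set box : Set (Fin s → ℝ) := Set.pi Set.univ (fun _ => Set.Ico (0:ℝ) 1) with hbox
  have hboxm : MeasurableSet box := MeasurableSet.univ_pi (fun _ => measurableSet_Ico)
  set μ : Measure (Fin s → ℝ) := volume.restrict box with hμ
  have hboxvol : volume box = 1 := by
    rw [hbox, volume_pi_pi]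
    simp [Real.volume_Ico]
  haveI : IsProbabilityMeasure μ := ⟨by rw [hμ, Measure.restrict_apply_univ, hboxvol]⟩
  -- countability and infinitude of P
  haveI : Countable (AddMonoidAlgebra (ZMod q) ℕ) := (AddMonoidAlgebra.coeffEquiv (R := ZMod q) (M := ℕ)).injective.countable
  haveI : Countable (Polynomial (ZMod q)) := Polynomial.toFinsupp_injective.countable
  have hPc : P.Countable := P.to_countable
  have hPinf : P.Infinite := by
    by_contra hfin
    rw [Set.not_infinite] at hfin
    haveI : Fintype P := hfin.fintype
    have hne : ∑' k : P, ((q : ENNReal) ^ F (fun i => (k.val i).natDegree))⁻¹ ≠ ⊤ := by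
      rw [tsum_fintype]
      refine (ENNReal.sum_lt_top.mpr (fun k _ => ?_)).ne
      exact ENNReal.inv_lt_top.mpr (by positivity)
    exact hne hdiv
  haveI := hPc.to_subtype
  haveI := hPinf.to_subtype
  obtain ⟨e⟩ : Nonempty (ℕ ≃ P) := nonempty_equiv_of_countable
  set Ev : ℕ → Set (Fin s → ℝ) := fun n => Ak q s (e n).val (Mk (e n).val) with hEv
  have hknz : ∀ n : ℕ, ∀ i, ((e n).val i) ≠ 0 := fun n => (hP _ (e n).2).1
  have hgcd : ∀ n, GcdOne (e n).val := fun n => (hP _ (e n).2).2.1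
  have hEvm : ∀ n, MeasurableSet (Ev n) := fun n => measurable_Ak _ _
  have hEvbox : ∀ n, Ev n ⊆ box := by
    intro n f hf
    rw [hbox]
    exact fun i _ => hf.1 i
  have hμA : ∀ n, μ (Ev n) = ((q:ENNReal) ^ (Mk (e n).val))⁻¹ := by
    intro n
    rw [hμ, Measure.restrict_apply' hboxm, Set.inter_eq_self_of_subset_left (hEvbox n), hEv]
    exact volume_Ak hs _ _ ⟨⟨0, hs⟩, hknz n _⟩
  set R : ℕ → ℕ → Prop := fun n m => ∃ c : Polynomial (ZMod q), IsUnit c ∧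
    ∀ i, (e n).val i = c * (e m).val i with hR
  have hind : ∀ n m, ¬ R n m → μ (Ev n ∩ Ev m) = μ (Ev n) * μ (Ev m) := by
    intro n m hnr
    rw [hμA n, hμA m, hμ, Measure.restrict_apply' hboxm,
      Set.inter_eq_self_of_subset_left (fun f hf => hEvbox n hf.1), hEv]
    exact volume_Ak_inter hs _ _ _ _
      (fun A B hA hB hsum =>
        dichotomy hs _ _ (hknz n) (hknz m) (hgcd n) (hgcd m) hnr A B hsum)
  have hcard : ∀ n N, ((Finset.range N).filter (fun m => R n m)).card ≤ q := by
    intro n N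
    have h1 : ((Finset.range N).filter (fun m => R n m)).card
        ≤ (Finset.univ : Finset (ZMod q)).card := by
      apply Finset.card_le_card_of_injOn
        (fun m => if h : R n m then (Classical.choose h).coeff 0 else 0)
        (fun m _ => Finset.mem_univ _)
      intro m1 hm1 m2 hm2 hval
      simp only [Finset.coe_filter, Set.mem_setOf_eq] at hm1 hm2
      dsimp only at hval
      rw [dif_pos hm1.2, dif_pos hm2.2] at hval
      obtain ⟨hu1, he1⟩ := Classical.choose_spec hm1.2
      obtain ⟨hu2, he2⟩ := Classical.choose_spec hm2.2
      set c1 := Classical.choose hm1.2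
      set c2 := Classical.choose hm2.2
      obtain ⟨r1, hr1, hc1⟩ := Polynomial.isUnit_iff.mp hu1
      obtain ⟨r2, hr2, hc2⟩ := Polynomial.isUnit_iff.mp hu2
      have hc12 : c1 = c2 := by
        rw [← hc1, ← hc2]
        congr 1
        rw [← Polynomial.coeff_C_zero (a := r1), ← Polynomial.coeff_C_zero (a := r2), hc1, hc2]
        exact hval
      have hval12 : (e m1).val = (e m2).val := by
        funext i
        have h3 : c1 * (e m1).val i = c2 * (e m2).val i := (he1 i).symm.trans (he2 i)
        rw [← hc12] at h3
        exact mul_left_cancel₀ hu1.ne_zero h3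
      have : e m1 = e m2 := Subtype.ext hval12
      exact e.injective this
    rw [Finset.card_univ, ZMod.card] at h1
    exact h1
  have hdiv2 : ∑' n, μ (Ev n) = ⊤ := by
    have h1 : ∑' n : ℕ, ((q : ENNReal) ^ F (fun i => ((e n).val i).natDegree))⁻¹ = ⊤ := by
      rw [e.tsum_eq (fun k : P => ((q : ENNReal) ^ F (fun i => (k.val i).natDegree))⁻¹)]
      exact hdiv
    refine top_le_iff.mp (le_trans (le_of_eq h1.symm) (ENNReal.tsum_le_tsum (fun n => ?_)))
    rw [hμA n]
    apply ENNReal.inv_le_inv.mpr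
    apply pow_le_pow_right₀ (by exact_mod_cast Nat.one_le_cast.mpr (by omega))
    have hh : Mk (e n).val = F (fun i => ((e n).val i).natDegree) - 1 := rfl
    omega
  have hbc := pairwise_bc μ Ev hEvm q R hcard hind hdiv2
  have hfinal : {f : Fin s → ℝ | (∀ i, f i ∈ Set.Ico (0:ℝ) 1) ∧
      ¬ {k : Fin s → Polynomial (ZMod q) | k ∈ P ∧
          ∀ n : ℕ, n + 2 ≤ F (fun i => (k i).natDegree) →
            ∑ i, fracCoeff q (k i) (qDigit q (f i)) n = 0}.Infinite}
      ⊆ {x | {n | x ∈ Ev n}.Finite} ∩ box := by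
    rintro f ⟨hbox', hninf⟩
    rw [Set.not_infinite] at hninf
    constructor
    · show {n | f ∈ Ev n}.Finite
      have hinj : Function.Injective (fun n => (e n).val) :=
        Subtype.val_injective.comp e.injective
      apply Set.Finite.subset (Set.Finite.preimage hinj.injOn hninf)
      intro n hfn
      rw [Set.mem_preimage]
      refine ⟨(e n).2, fun j hj => ?_⟩
      refine hfn.2 j ?_
      have hh : Mk (e n).val = F (fun i => ((e n).val i).natDegree) - 1 := rfl
      omega
    · rw [hbox]
      exact fun i _ => hbox' i
  refine le_antisymm ?_ (zero_le)
  calc volume {f : Fin s → ℝ | (∀ i, f i ∈ Set.Ico (0:ℝ) 1) ∧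
      ¬ {k : Fin s → Polynomial (ZMod q) | k ∈ P ∧
          ∀ n : ℕ, n + 2 ≤ F (fun i => (k i).natDegree) →
            ∑ i, fracCoeff q (k i) (qDigit q (f i)) n = 0}.Infinite}
      ≤ volume ({x | {n | x ∈ Ev n}.Finite} ∩ box) := measure_mono hfinal
    _ = μ {x | {n | x ∈ Ev n}.Finite} := (Measure.restrict_apply' hboxm).symm
    _ = 0 := hbc

end Final
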